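/- arXiv:2104.02003 — 2 statements merged into one kernel-verified Lean document; each statement's English description precedes it below -/
import Mathlib

section
/- For every real M > 0 and every λ ∈ {1,2,3}, the sector Z_λ of the standard Stein trisection of Q_M is an analytic polyhedron: there exist finitely many functions f₁,…,f_m : ℂ² → ℂ, each holomorphic on all of ℂ² (i.e. differentiable over ℂ), such that Z_λ = {z ∈ ℂ² : |f_j(z)| ≤ 1 for all j = 1,…,m}. -/
/-- The bidisk-like domain `Q_M ⊂ ℂ²`. -/
def QM (M : ℝ) : Set (ℂ × ℂ) :=
  {p | |p.1.re| ≤ 1 / M ∧ |p.1.im| ≤ M ∧ |p.2.re| ≤ 1 / M ∧ |p.2.im| ≤ M}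

/-- `φ₁(z₁,z₂) = Re z₂`. -/
def phi1 (p : ℂ × ℂ) : ℝ := p.2.re

/-- `φ₂(z₁,z₂) = −√3·Re z₁ − Re z₂`. -/
noncomputable def phi2 (p : ℂ × ℂ) : ℝ := -Real.sqrt 3 * p.1.re - p.2.re

/-- `φ₃(z₁,z₂) = √3·Re z₁ − Re z₂`. -/
noncomputable def phi3 (p : ℂ × ℂ) : ℝ := Real.sqrt 3 * p.1.re - p.2.re

/-- First sector of the standard Stein trisection: `φ₁ ≤ 0` and `φ₃ ≥ 0`. -/
noncomputable def Z1 (M : ℝ) : Set (ℂ × ℂ) := {p ∈ QM M | phi1 p ≤ 0 ∧ 0 ≤ phi3 p}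

/-- Second sector: `φ₂ ≤ 0` and `φ₁ ≥ 0`. -/
noncomputable def Z2 (M : ℝ) : Set (ℂ × ℂ) := {p ∈ QM M | phi2 p ≤ 0 ∧ 0 ≤ phi1 p}

/-- Third sector: `φ₃ ≤ 0` and `φ₂ ≥ 0`. -/
noncomputable def Z3 (M : ℝ) : Set (ℂ × ℂ) := {p ∈ QM M | phi3 p ≤ 0 ∧ 0 ≤ phi2 p}

noncomputable def lf (a b c d e : ℝ) (p : ℂ × ℂ) : ℂ :=
  Complex.exp (((a : ℂ) - Complex.I * b) * p.1 + ((c : ℂ) - Complex.I * d) * p.2 - e)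

lemma lf_diff (a b c d e : ℝ) : Differentiable ℂ (lf a b c d e) := by
  apply Complex.differentiable_exp.comp
  fun_prop

lemma lf_le (a b c d e : ℝ) (p : ℂ × ℂ) :
    ‖lf a b c d e p‖ ≤ 1 ↔ a * p.1.re + b * p.1.im + c * p.2.re + d * p.2.im ≤ e := by
  rw [lf, Complex.norm_exp, Real.exp_le_one_iff]
  simp [Complex.add_re, Complex.sub_re, Complex.mul_re, Complex.mul_im]
  constructor <;> intro h <;> nlinarith [h]

lemma box_lemma (M : ℝ) (g1 g2 : ℝ → ℝ → ℝ)
    (hg1 : ∃ a c : ℝ, ∀ x y, g1 x y = a * x + c * y)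
    (hg2 : ∃ a c : ℝ, ∀ x y, g2 x y = a * x + c * y) :
    ∃ (f : Fin 10 → (ℂ × ℂ → ℂ)),
      (∀ j, Differentiable ℂ (f j)) ∧
      {p ∈ QM M | g1 p.1.re p.2.re ≤ 0 ∧ g2 p.1.re p.2.re ≤ 0}
        = {z : ℂ × ℂ | ∀ j, ‖f j z‖ ≤ 1} := by
  obtain ⟨a1, c1, h1⟩ := hg1
  obtain ⟨a2, c2, h2⟩ := hg2
  refine ⟨![lf 1 0 0 0 (1/M), lf (-1) 0 0 0 (1/M), lf 0 1 0 0 M, lf 0 (-1) 0 0 M,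
    lf 0 0 1 0 (1/M), lf 0 0 (-1) 0 (1/M), lf 0 0 0 1 M, lf 0 0 0 (-1) M,
    lf a1 0 c1 0 0, lf a2 0 c2 0 0], ?_, ?_⟩
  · intro j; fin_cases j <;> exact lf_diff _ _ _ _ _
  · ext p
    simp only [QM, Set.mem_setOf_eq, Set.mem_sep_iff, abs_le, h1, h2,
      Fin.forall_fin_succ, Matrix.cons_val_zero, Matrix.cons_val_succ,
      lf_le]
    constructor
    · rintro ⟨⟨⟨u1, u2⟩, ⟨v1, v2⟩, ⟨w1, w2⟩, x1, x2⟩, s1, s2⟩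
      refine ⟨by linarith, by linarith, by linarith, by linarith, by linarith,
        by linarith, by linarith, by linarith, by linarith, by linarith, fun i => i.elim0⟩
    · rintro ⟨k1, k2, k3, k4, k5, k6, k7, k8, k9, k10, -⟩
      exact ⟨⟨⟨by linarith, by linarith⟩, ⟨by linarith, by linarith⟩,
        ⟨by linarith, by linarith⟩, by linarith, by linarith⟩, by linarith, by linarith⟩

/-- each sector `Z_λ` (λ = 1,2,3) of the standard Stein trisection of `Q_M` is
an analytic polyhedron: it is cut out, inside ℂ², by the conditions `|f_j| ≤ 1` for finitely
many functions `f_j : ℂ² → ℂ` that are holomorphic on all of ℂ². -/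
theorem stmt_5 (M : ℝ) (hM : 0 < M) (Z : Set (ℂ × ℂ))
    (hZ : Z = Z1 M ∨ Z = Z2 M ∨ Z = Z3 M) :
    ∃ (m : ℕ) (f : Fin m → (ℂ × ℂ → ℂ)),
      (∀ j, Differentiable ℂ (f j)) ∧
      Z = {z : ℂ × ℂ | ∀ j, ‖f j z‖ ≤ 1} := by
  rcases hZ with rfl | rfl | rfl
  · obtain ⟨f, hd, he⟩ := box_lemma M (fun _ y => y) (fun x y => -Real.sqrt 3 * x + y)
      ⟨0, 1, by intro x y; ring⟩ ⟨-Real.sqrt 3, 1, by intro x y; ring⟩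
    refine ⟨10, f, hd, ?_⟩
    rw [← he]
    ext p
    simp only [Z1, phi1, phi3, Set.mem_setOf_eq, Set.mem_sep_iff]
    constructor <;> rintro ⟨hq, ha, hb⟩ <;> exact ⟨hq, by linarith, by linarith⟩
  · obtain ⟨f, hd, he⟩ := box_lemma M (fun x y => -Real.sqrt 3 * x - y) (fun _ y => -y)
      ⟨-Real.sqrt 3, -1, by intro x y; ring⟩ ⟨0, -1, by intro x y; ring⟩
    refine ⟨10, f, hd, ?_⟩
    rw [← he]
    ext p
    simp only [Z2, phi1, phi2, Set.mem_setOf_eq, Set.mem_sep_iff]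
    constructor <;> rintro ⟨hq, ha, hb⟩ <;> exact ⟨hq, by linarith, by linarith⟩
  · obtain ⟨f, hd, he⟩ := box_lemma M (fun x y => Real.sqrt 3 * x - y)
      (fun x y => Real.sqrt 3 * x + y)
      ⟨Real.sqrt 3, -1, by intro x y; ring⟩ ⟨Real.sqrt 3, 1, by intro x y; ring⟩
    refine ⟨10, f, hd, ?_⟩
    rw [← he]
    ext p
    simp only [Z3, phi2, phi3, Set.mem_setOf_eq, Set.mem_sep_iff]
    constructor <;> rintro ⟨hq, ha, hb⟩ <;> exact ⟨hq, by linarith, by linarith⟩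
end

section
/- Let n ≥ 1 be an integer, let ε ∈ ℂ with ε ≠ 0, and let f : ℂ → ℂ be f(z) = z^{n+1} − ε(n+1)z. For every ζ₀ ∈ ℂ with ζ₀^n = ε, the fiber of f over the critical value f(ζ₀), namely {z ∈ ℂ : f(z) = f(ζ₀)}, has exactly n elements. (Thus f is a simple branched covering: each critical fiber contains exactly one critical point, at which exactly two sheets come together.) -/
open Polynomial

/-- for `f(z) = z^{n+1} − ε(n+1)z` with `n ≥ 1` and `ε ≠ 0`, the fiber of `f`
over the critical value `f(ζ₀)`, for any `ζ₀` with `ζ₀^n = ε`, has exactly `n` elements. -/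
theorem stmt_8 (n : ℕ) (hn : 1 ≤ n) (ε : ℂ) (hε : ε ≠ 0) (ζ₀ : ℂ) (hζ₀ : ζ₀ ^ n = ε) :
    {z : ℂ | z ^ (n + 1) - ε * (n + 1) * z = ζ₀ ^ (n + 1) - ε * (n + 1) * ζ₀}.ncard = n := by
  have hζ₀ne : ζ₀ ≠ 0 := by
    intro h; apply hε; rw [← hζ₀, h, zero_pow]; omega
  set c : ℂ := ζ₀ ^ (n + 1) - ε * (n + 1) * ζ₀ with hc
  set p : ℂ[X] := X ^ (n + 1) - C (ε * (n + 1)) * X - C c with hp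
  have heval : ∀ z : ℂ, p.eval z = z ^ (n + 1) - ε * (n + 1) * z - c := by
    intro z; simp [hp]
  -- monic & degree
  have hmon : p.Monic := by
    have h1 : p = X ^ (n + 1) - (C (ε * (n + 1)) * X + C c) := by ring
    rw [h1]
    apply monic_X_pow_sub
    exact lt_of_le_of_lt degree_linear_le (by exact_mod_cast Nat.lt_succ_of_le hn)
  have hpne : p ≠ 0 := hmon.ne_zero
  have hdeg : p.natDegree = n + 1 := by
    have h1 : p = X ^ (n + 1) - (C (ε * (n + 1)) * X + C c) := by ring
    rw [h1]
    compute_degree!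
    simp [show n ≠ 0 by omega]
  -- derivative evaluations
  set d : ℂ[X] := derivative p with hd
  have hdeval : ∀ z : ℂ, d.eval z = (n + 1) * z ^ n - ε * (n + 1) := by
    intro z; simp [hd, hp]
  have hdde : ∀ z : ℂ, (derivative d).eval z = (n + 1) * (n * z ^ (n - 1)) := by
    intro z
    simp [hd, hp, derivative_X_pow]
  have hdne : d ≠ 0 := by
    intro h
    have := hdeval 0
    rw [h] at this
    simp [zero_pow (by omega : n ≠ 0)] at this
    rcases this with h | h
    · exact hε h
    · exact Nat.cast_add_one_ne_zero n h
  -- ζ₀ is a root of p and d, but not of derivative d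
  have hroot : p.IsRoot ζ₀ := by simp [IsRoot, heval, hc]
  have hdroot : d.IsRoot ζ₀ := by simp [IsRoot, hdeval, hζ₀]; ring
  have hddne : ¬ (derivative d).IsRoot ζ₀ := by
    simp only [IsRoot, hdde]
    intro h
    rcases mul_eq_zero.1 h with h | h
    · exact Nat.cast_add_one_ne_zero n h
    · rcases mul_eq_zero.1 h with h | h
      · have hn0 : (n : ℂ) ≠ 0 := Nat.cast_ne_zero.mpr (by omega)
        exact hn0 h
      · exact pow_ne_zero _ hζ₀ne h
  -- root multiplicity of ζ₀ in p is 2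
  have hmd : d.rootMultiplicity ζ₀ = 1 := by
    have h1 := derivative_rootMultiplicity_of_root hdroot
    have h2 : (derivative d).rootMultiplicity ζ₀ = 0 := by
      exact rootMultiplicity_eq_zero hddne
    have h3 : 1 ≤ d.rootMultiplicity ζ₀ := (rootMultiplicity_pos hdne).2 hdroot
    omega
  have hmp : p.rootMultiplicity ζ₀ = 2 := by
    have h1 := derivative_rootMultiplicity_of_root hroot
    rw [← hd, hmd] at h1
    have h3 : 1 ≤ p.rootMultiplicity ζ₀ := (rootMultiplicity_pos hpne).2 hroot
    omega
  -- all other roots are simple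
  have hsimple : ∀ z : ℂ, p.IsRoot z → z ≠ ζ₀ → p.rootMultiplicity z = 1 := by
    intro z hz hzne
    have h3 : 1 ≤ p.rootMultiplicity z := (rootMultiplicity_pos hpne).2 hz
    by_contra hne
    have h2 : 2 ≤ p.rootMultiplicity z := by omega
    have hder : d.IsRoot z := by
      have h1 := derivative_rootMultiplicity_of_root hz
      rw [← hd] at h1
      have : 1 ≤ d.rootMultiplicity z := by omega
      exact (rootMultiplicity_pos hdne).1 (by omega)
    have hzn : z ^ n = ε := by
      have h0 := hdeval z
      rw [hder] at h0
      have h1 : ((n : ℂ) + 1) * (z ^ n - ε) = 0 := by linear_combination -h0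
      rcases mul_eq_zero.1 h1 with h | h
      · exact absurd h (Nat.cast_add_one_ne_zero n)
      · exact sub_eq_zero.mp h
    -- then p(z) = 0 gives -εnz - c = 0, and c = -εnζ₀, so z = ζ₀
    have hpz := hz
    simp only [IsRoot, heval] at hpz
    have e1 : z ^ (n + 1) = ε * z := by rw [pow_succ, hzn]
    have e2 : ζ₀ ^ (n + 1) = ε * ζ₀ := by rw [pow_succ, hζ₀]
    rw [e1, hc, e2] at hpz
    have hεn : ε * n ≠ 0 := mul_ne_zero hε (Nat.cast_ne_zero.mpr (by omega))
    apply hzne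
    have : ε * n * z = ε * n * ζ₀ := by ring_nf at hpz ⊢; linear_combination -hpz
    exact mul_left_cancel₀ hεn this
  -- the fiber equals the set of roots
  have hset : {z : ℂ | z ^ (n + 1) - ε * (n + 1) * z = c} = ↑p.roots.toFinset := by
    ext z
    simp [Multiset.mem_toFinset, mem_roots, hpne, IsRoot, heval, sub_eq_zero]
  rw [hset, Set.ncard_coe_finset]
  -- counting
  have hcard : p.roots.card = n + 1 := by
    rw [← hdeg]
    exact IsAlgClosed.card_roots_eq_natDegree
  have hsum : ∑ a ∈ p.roots.toFinset, p.roots.count a = p.roots.card :=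
    Multiset.toFinset_sum_count_eq p.roots
  have hmem : ζ₀ ∈ p.roots.toFinset := by
    rw [Multiset.mem_toFinset, mem_roots hpne]; exact hroot
  rw [← Finset.add_sum_erase _ _ hmem] at hsum
  have hrest : ∑ a ∈ p.roots.toFinset.erase ζ₀, p.roots.count a
      = (p.roots.toFinset.erase ζ₀).card := by
    rw [Finset.card_eq_sum_ones]
    apply Finset.sum_congr rfl
    intro a ha
    rw [Finset.mem_erase, Multiset.mem_toFinset] at ha
    have hr : p.IsRoot a := (isRoot_of_mem_roots ha.2)
    rw [count_roots, hsimple a hr ha.1]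
  rw [hrest, count_roots, hmp, Finset.card_erase_of_mem hmem, hcard] at hsum
  have hpos : 1 ≤ p.roots.toFinset.card := Finset.card_pos.mpr ⟨ζ₀, hmem⟩
  omega
end
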